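/- Assuming the existence of a peak-removing map f_1 on uncolored Dyck paths with at most 4 preimages per path (and at least 1), for every s ≥ 1 and m ≥ 1 there exists a map f from s-colored Dyck paths of length 2m to s-colored Dyck paths of length 2m-2 such that: (i) f(s) is obtained by removing a single colored peak; (ii) every s-colored Dyck path of length 2m-2 has at least s preimages; (iii) every s-colored Dyck path of length 2m-2 has at most 4s preimages. -/

import Mathlib

/-- `DyckL l` : `l` is a (plain) Dyck path: a list of `±1` steps with nonnegative
partial sums and total sum `0`. -/
def DyckL (l : List ℤ) : Prop :=
  (∀ x ∈ l, x = 1 ∨ x = -1) ∧ (∀ k, 0 ≤ (l.take k).sum) ∧ l.sum = 0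

/-- `CD s w` : `w` is an `s`-colored Dyck word over the alphabet `Fin s × Bool`
(`(k, true)` an up-step of color `k`, `(k, false)` a down-step of color `k`), where
both members of each matched up-down pair carry the same color. -/
inductive CD (s : ℕ) : List (Fin s × Bool) → Prop
  | nil : CD s []
  | pair (k : Fin s) {w₁ w₂} : CD s w₁ → CD s w₂ →
      CD s ((k, true) :: w₁ ++ (k, false) :: w₂)

namespace CDAux

variable {s : ℕ}

/-- Stack machine processing colored words: push color on up-step, pop matching
color on down-step. -/
def proc : List (Fin s × Bool) → List (Fin s) → Option (List (Fin s))
  | [], st => some st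
  | (k, true) :: w, st => proc w (k :: st)
  | (_, false) :: _, [] => none
  | (k, false) :: w, c :: st' => if c = k then proc w st' else none

lemma proc_append (a b : List (Fin s × Bool)) (st : List (Fin s)) :
    proc (a ++ b) st = (proc a st).bind (fun st' => proc b st') := by
  induction a generalizing st with
  | nil => simp [proc]
  | cons x a ih =>
    obtain ⟨k, b'⟩ := x
    cases b' with
    | true => simp [proc, ih]
    | false =>
      cases st with
      | nil => simp [proc]
      | cons c st' =>
        by_cases hc : c = k <;> simp [proc, hc, ih]

lemma cd_proc {w : List (Fin s × Bool)} (h : CD s w) : ∀ st, proc w st = some st := by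
  induction h with
  | nil => intro st; rfl
  | @pair k w₁ w₂ h1 h2 ih1 ih2 =>
    intro st
    have e : proc (((k, true) :: w₁) ++ (k, false) :: w₂) st
        = proc (w₁ ++ (k, false) :: w₂) (k :: st) := rfl
    rw [e, proc_append, ih1, Option.bind_some]
    show proc ((k, false) :: w₂) (k :: st) = some st
    simp [proc, ih2 st]

lemma proc_cd_aux : ∀ (n : ℕ) (w : List (Fin s × Bool)) (st : List (Fin s)),
    w.length ≤ n → proc w st = some [] →
    (match st with
     | [] => CD s w
     | k :: st' => ∃ w₁ w₂, w = w₁ ++ (k, false) :: w₂ ∧ CD s w₁ ∧ proc w₂ st' = some []) := by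
  intro n
  induction n with
  | zero =>
    intro w st hw hp
    rw [Nat.le_zero, List.length_eq_zero_iff] at hw
    subst hw
    simp only [proc, Option.some.injEq] at hp
    subst hp
    exact CD.nil
  | succ n ih =>
    intro w st hw hp
    cases w with
    | nil =>
      simp only [proc, Option.some.injEq] at hp
      subst hp
      exact CD.nil
    | cons x w' =>
      obtain ⟨k, b⟩ := x
      cases b with
      | true =>
        simp only [proc] at hp
        have hlen : w'.length ≤ n := by simpa using hw
        have H := ih w' (k :: st) hlen hp
        obtain ⟨w₁, w₂, hw', hcd1, hp2⟩ := H
        have hlen2 : w₂.length ≤ n := by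
          have := congrArg List.length hw'
          simp at this; omega
        cases st with
        | nil =>
          have hcd2 : CD s w₂ := ih w₂ [] hlen2 hp2
          rw [hw']
          exact CD.pair k hcd1 hcd2
        | cons c st'' =>
          have H2 := ih w₂ (c :: st'') hlen2 hp2
          obtain ⟨u₁, u₂, hw₂, hcdu, hpu⟩ := H2
          refine ⟨(k, true) :: w₁ ++ (k, false) :: u₁, u₂, ?_, CD.pair k hcd1 hcdu, hpu⟩
          rw [hw', hw₂]
          simp
      | false =>
        cases st with
        | nil => simp [proc] at hp
        | cons c st' =>
          simp only [proc] at hp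
          by_cases hc : c = k
          · subst hc
            rw [if_pos rfl] at hp
            exact ⟨[], w', rfl, CD.nil, hp⟩
          · rw [if_neg hc] at hp; exact absurd hp (by simp)

lemma cd_iff (w : List (Fin s × Bool)) : CD s w ↔ proc w [] = some [] := by
  constructor
  · intro h; exact cd_proc h []
  · intro h; exact proc_cd_aux w.length w [] le_rfl h

lemma peak_remove {w₁ w₂ : List (Fin s × Bool)} {k k' : Fin s}
    (h : CD s (w₁ ++ (k, true) :: (k', false) :: w₂)) :
    k = k' ∧ CD s (w₁ ++ w₂) := by
  rw [cd_iff, proc_append] at h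
  rw [cd_iff, proc_append]
  cases hp : proc w₁ ([] : List (Fin s)) with
  | none => rw [hp] at h; simp at h
  | some st =>
    rw [hp] at h
    rw [Option.bind_some] at h
    simp only [proc] at h
    by_cases hc : k = k'
    · subst hc
      rw [if_pos rfl] at h
      exact ⟨rfl, by rw [Option.bind_some]; exact h⟩
    · rw [if_neg hc] at h; exact absurd h (by simp)

lemma peak_insert {w₁ w₂ : List (Fin s × Bool)} (k : Fin s)
    (h : CD s (w₁ ++ w₂)) :
    CD s (w₁ ++ (k, true) :: (k, false) :: w₂) := by
  rw [cd_iff, proc_append] at h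
  rw [cd_iff, proc_append]
  cases hp : proc w₁ ([] : List (Fin s)) with
  | none => rw [hp] at h; simp at h
  | some st =>
    rw [hp] at h
    rw [Option.bind_some] at h
    rw [Option.bind_some]
    simp [proc, h]

/-- underlying uncolored word -/
def U (w : List (Fin s × Bool)) : List ℤ := w.map (fun a => if a.2 then 1 else -1)

lemma U_length (w : List (Fin s × Bool)) : (U w).length = w.length := List.length_map _

lemma U_take (w : List (Fin s × Bool)) (n : ℕ) : U (w.take n) = (U w).take n :=
  (List.map_take).symm ▸ rfl

lemma U_drop (w : List (Fin s × Bool)) (n : ℕ) : U (w.drop n) = (U w).drop n :=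
  (List.map_drop).symm ▸ rfl

lemma U_append (a b : List (Fin s × Bool)) : U (a ++ b) = U a ++ U b := List.map_append

lemma proc_sum {w : List (Fin s × Bool)} : ∀ {st st' : List (Fin s)},
    proc w st = some st' → (U w).sum + st.length = st'.length := by
  induction w with
  | nil => intro st st' h; simp only [proc, Option.some.injEq] at h; subst h; simp [U]
  | cons x w ih =>
    intro st st' h
    obtain ⟨k, b⟩ := x
    cases b with
    | true =>
      have := ih (st := k :: st) (st' := st') h
      simp only [U, List.map_cons, List.sum_cons] at this ⊢
      simp only [List.length_cons] at this
      push_cast at this ⊢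
      linarith
    | false =>
      cases st with
      | nil => simp [proc] at h
      | cons c st'' =>
        simp only [proc] at h
        by_cases hc : c = k
        · rw [if_pos hc] at h
          have := ih h
          simp only [U, List.map_cons, List.sum_cons, List.length_cons] at this ⊢
          push_cast at this ⊢
          linarith
        · rw [if_neg hc] at h; exact absurd h (by simp)

lemma cd_dyck {w : List (Fin s × Bool)} (h : CD s w) : DyckL (U w) := by
  have hp : proc w [] = some [] := (cd_iff w).1 h
  refine ⟨?_, ?_, ?_⟩
  · intro x hx
    simp only [U, List.mem_map] at hx
    obtain ⟨a, _, rfl⟩ := hx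
    cases a.2 <;> simp
  · intro k
    have hsplit : w = w.take k ++ w.drop k := (List.take_append_drop k w).symm
    rw [hsplit, proc_append] at hp
    cases hq : proc (w.take k) ([] : List (Fin s)) with
    | none => rw [hq] at hp; simp at hp
    | some st =>
      have h2 := proc_sum hq
      simp only [List.length_nil, Nat.cast_zero, add_zero] at h2
      rw [U_take] at h2
      rw [h2]
      positivity
  · have := proc_sum hp
    simpa using this

lemma finite_dyck (N : ℕ) : Finite {l : List ℤ // l.length = N ∧ DyckL l} := by
  let F : {l : List ℤ // l.length = N ∧ DyckL l} → (Fin N → Bool) := fun l i =>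
    decide (l.1[(i : ℕ)]'(by rw [l.2.1]; exact i.isLt) = 1)
  have hF : Function.Injective F := by
    intro a b hab
    apply Subtype.ext
    apply List.ext_getElem (by rw [a.2.1, b.2.1])
    intro i h1 h2
    have hi : i < N := by rw [← a.2.1]; exact h1
    have := congrFun hab ⟨i, hi⟩
    simp only [F, decide_eq_decide] at this
    have ha := a.2.2.1 _ (List.getElem_mem h1)
    have hb := b.2.2.1 _ (List.getElem_mem h2)
    rcases ha with ha | ha <;> rcases hb with hb | hb <;> rw [ha, hb] at this ⊢ <;> simp_all
  exact Finite.of_injective F hF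

lemma split_colored {w : List (Fin s × Bool)} {l₁ l₂ : List ℤ} (hw : CD s w)
    (h : U w = l₁ ++ 1 :: -1 :: l₂) :
    ∃ k : Fin s,
      w = w.take l₁.length ++ (k, true) :: (k, false) :: w.drop (l₁.length + 2) ∧
      U (w.take l₁.length) = l₁ ∧ U (w.drop (l₁.length + 2)) = l₂ ∧
      CD s (w.take l₁.length ++ w.drop (l₁.length + 2)) := by
  set n := l₁.length with hn
  have h1 : U (w.take n) = l₁ := by
    rw [U_take, h, hn, List.take_left]
  have h2 : U (w.drop n) = 1 :: -1 :: l₂ := by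
    rw [U_drop, h, hn, List.drop_left]
  cases wd : w.drop n with
  | nil => rw [wd] at h2; simp [U] at h2
  | cons a r =>
    cases r with
    | nil => rw [wd] at h2; simp [U] at h2
    | cons b r' =>
      rw [wd] at h2
      simp only [U, List.map_cons, List.cons.injEq] at h2
      obtain ⟨ha, hb, hr'⟩ := h2
      have ha2 : a.2 = true := by
        cases hab : a.2
        · rw [hab] at ha; norm_num at ha
        · rfl
      have hb2 : b.2 = false := by
        cases hbb : b.2
        · rfl
        · rw [hbb] at hb; norm_num at hb
      have hdd : w.drop (n + 2) = r' := by
        have h3 : w.drop (n + 2) = (w.drop n).drop 2 := by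
          rw [List.drop_drop]
        rw [h3, wd]
        rfl
      have haa : a = (a.1, true) := by rw [← ha2]
      have hbb : b = (b.1, false) := by rw [← hb2]
      have hweq : w = w.take n ++ (a.1, true) :: (b.1, false) :: r' := by
        conv_lhs => rw [← List.take_append_drop n w, wd]
        rw [← haa, ← hbb]
      have hcd0 : CD s (w.take n ++ (a.1, true) :: (b.1, false) :: r') := by
        rw [← hweq]; exact hw
      obtain ⟨hk, hcd⟩ := peak_remove hcd0
      rw [hk] at hweq
      refine ⟨b.1, ?_, h1, ?_, ?_⟩ <;> rw [hdd]
      · exact hweq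
      · exact hr'
      · exact hcd

end CDAux

/-- Assuming the `s = 1` peak-removal lemma (Bravyi et al.) on uncolored Dyck paths
(surjective, at most `4` preimages), for every `s ≥ 1` and `m ≥ 1` there is a map `f`
from `s`-colored Dyck paths of length `2m` to `s`-colored Dyck paths of length `2m-2`
such that (i) `f p` is obtained from `p` by removing a single colored peak `ℓᵏrᵏ`;
(ii) every `s`-colored Dyck path of length `2m-2` has at least `s` preimages;
(iii) every `s`-colored Dyck path of length `2m-2` has at most `4s` preimages. -/
theorem colored_dyck_peak_removal_map
    (h1 : ∀ m : ℕ, 1 ≤ m →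
      ∃ f : {l : List ℤ // l.length = 2 * m ∧ DyckL l} →
          {l : List ℤ // l.length = 2 * m - 2 ∧ DyckL l},
        (∀ p, ∃ l₁ l₂ : List ℤ, p.1 = l₁ ++ 1 :: (-1) :: l₂ ∧ (f p).1 = l₁ ++ l₂) ∧
        Function.Surjective f ∧
        (∀ t, Nat.card {p // f p = t} ≤ 4)) :
    ∀ s m : ℕ, 1 ≤ s → 1 ≤ m →
      ∃ f : {l : List (Fin s × Bool) // l.length = 2 * m ∧ CD s l} →
          {l : List (Fin s × Bool) // l.length = 2 * m - 2 ∧ CD s l},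
        (∀ p, ∃ (l₁ l₂ : List (Fin s × Bool)) (k : Fin s),
          p.1 = l₁ ++ (k, true) :: (k, false) :: l₂ ∧ (f p).1 = l₁ ++ l₂) ∧
        (∀ t, s ≤ Nat.card {p // f p = t}) ∧
        (∀ t, Nat.card {p // f p = t} ≤ 4 * s) := by
  intro s m hs hm
  obtain ⟨f1, hpk, hsurj, hcard⟩ := h1 m hm
  classical
  -- the uncolored shadow of a colored Dyck path
  let q : {l : List (Fin s × Bool) // l.length = 2 * m ∧ CD s l} →
      {l : List ℤ // l.length = 2 * m ∧ DyckL l} :=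
    fun p => ⟨CDAux.U p.1, by rw [CDAux.U_length, p.2.1], CDAux.cd_dyck p.2.2⟩
  let L1 : {l : List ℤ // l.length = 2 * m ∧ DyckL l} → List ℤ := fun r => (hpk r).choose
  let L2 : {l : List ℤ // l.length = 2 * m ∧ DyckL l} → List ℤ :=
    fun r => (hpk r).choose_spec.choose
  have HP : ∀ r, r.1 = L1 r ++ 1 :: (-1) :: L2 r ∧ (f1 r).1 = L1 r ++ L2 r :=
    fun r => (hpk r).choose_spec.choose_spec
  let n : {l : List ℤ // l.length = 2 * m ∧ DyckL l} → ℕ := fun r => (L1 r).length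
  have hlenr : ∀ r, n r + 2 + (L2 r).length = r.1.length := by
    intro r
    have := congrArg List.length (HP r).1
    simp only [List.length_append, List.length_cons] at this
    simp only [n]
    omega
  have hsp : ∀ p, ∃ k : Fin s,
      p.1 = p.1.take (n (q p)) ++ (k, true) :: (k, false) :: p.1.drop (n (q p) + 2) ∧
      CDAux.U (p.1.take (n (q p))) = L1 (q p) ∧
      CDAux.U (p.1.drop (n (q p) + 2)) = L2 (q p) ∧
      CD s (p.1.take (n (q p)) ++ p.1.drop (n (q p) + 2)) := by
    intro p
    exact CDAux.split_colored p.2.2 ((HP (q p)).1)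
  have hle : ∀ p, n (q p) + 2 ≤ 2 * m := by
    intro p
    have h2 := hlenr (q p)
    have h3 : (q p).1.length = 2 * m := (q p).2.1
    omega
  have hflen : ∀ p : {l : List (Fin s × Bool) // l.length = 2 * m ∧ CD s l},
      (p.1.take (n (q p)) ++ p.1.drop (n (q p) + 2)).length = 2 * m - 2 := by
    intro p
    have h2 := hle p
    have h3 : p.1.length = 2 * m := p.2.1
    simp only [List.length_append, List.length_take, List.length_drop, h3]
    omega
  let f : {l : List (Fin s × Bool) // l.length = 2 * m ∧ CD s l} →
      {l : List (Fin s × Bool) // l.length = 2 * m - 2 ∧ CD s l} :=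
    fun p => ⟨p.1.take (n (q p)) ++ p.1.drop (n (q p) + 2),
      hflen p, (hsp p).choose_spec.2.2.2⟩
  have key : ∀ t, ∃ u : {l : List ℤ // l.length = 2 * m - 2 ∧ DyckL l},
      Nat.card {p // f p = t} = s * Nat.card {r // f1 r = u} := by
    intro t
    refine ⟨⟨CDAux.U t.1, by rw [CDAux.U_length, t.2.1], CDAux.cd_dyck t.2.2⟩, ?_⟩
    set u : {l : List ℤ // l.length = 2 * m - 2 ∧ DyckL l} :=
      ⟨CDAux.U t.1, by rw [CDAux.U_length, t.2.1], CDAux.cd_dyck t.2.2⟩ with hu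
    have hnle : ∀ r : {l : List ℤ // l.length = 2 * m ∧ DyckL l}, f1 r = u →
        n r ≤ 2 * m - 2 ∧ CDAux.U t.1 = L1 r ++ L2 r := by
      intro r hr
      have h2 := (HP r).2
      rw [hr] at h2
      constructor
      · have h3 := congrArg List.length h2
        rw [u.2.1, List.length_append] at h3
        simp only [n]
        omega
      · exact h2
    have main : ∀ (k : Fin s) (r : {l : List ℤ // l.length = 2 * m ∧ DyckL l})
        (hr : f1 r = u),
        ∃ P : {p // f p = t},
          P.1.1 = t.1.take (n r) ++ (k, true) :: (k, false) :: t.1.drop (n r) ∧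
          q P.1 = r := by
      intro k r hr
      obtain ⟨hnle2, hU⟩ := hnle r hr
      have hnn : n r = (L1 r).length := rfl
      have e0 : CDAux.U ((k, true) :: (k, false) :: t.1.drop (n r))
          = 1 :: (-1) :: (CDAux.U t.1).drop (n r) := by
        simp [CDAux.U, List.map_drop]
      have hUp : CDAux.U (t.1.take (n r) ++ (k, true) :: (k, false) :: t.1.drop (n r))
          = r.1 := by
        rw [CDAux.U_append, CDAux.U_take, e0, hU, List.take_left' rfl, List.drop_left' rfl]
        exact ((HP r).1).symm
      have hCDp : CD s (t.1.take (n r) ++ (k, true) :: (k, false) :: t.1.drop (n r)) := by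
        have h5 := t.2.2
        rw [← List.take_append_drop (n r) t.1] at h5
        exact CDAux.peak_insert k h5
      have hplen : (t.1.take (n r) ++ (k, true) :: (k, false) :: t.1.drop (n r)).length
          = 2 * m := by
        have h6 : t.1.length = 2 * m - 2 := t.2.1
        simp only [List.length_append, List.length_take, List.length_cons,
          List.length_drop, h6]
        omega
      refine ⟨⟨⟨_, hplen, hCDp⟩, ?_⟩, rfl, Subtype.ext hUp⟩
      apply Subtype.ext
      show (t.1.take (n r) ++ (k, true) :: (k, false) :: t.1.drop (n r)).take
            (n (q ⟨_, hplen, hCDp⟩)) ++ _ = t.1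
      have hqp : q (⟨_, hplen, hCDp⟩ :
          {l : List (Fin s × Bool) // l.length = 2 * m ∧ CD s l}) = r := Subtype.ext hUp
      rw [hqp]
      have e1 : (t.1.take (n r) ++ (k, true) :: (k, false) :: t.1.drop (n r)).take (n r)
          = t.1.take (n r) := by
        apply List.take_left'
        simp only [List.length_take, t.2.1]
        omega
      have e2 : (t.1.take (n r) ++ (k, true) :: (k, false) :: t.1.drop (n r)).drop (n r + 2)
          = t.1.drop (n r) := by
        rw [show t.1.take (n r) ++ (k, true) :: (k, false) :: t.1.drop (n r)
            = (t.1.take (n r) ++ [(k, true), (k, false)]) ++ t.1.drop (n r) by simp]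
        apply List.drop_left'
        simp only [List.length_append, List.length_take, List.length_cons,
          List.length_nil, t.2.1]
        omega
      rw [e1, e2, List.take_append_drop]
    let G : Fin s × {r // f1 r = u} → {p // f p = t} :=
      fun x => (main x.1 x.2.1 x.2.2).choose
    have hGspec : ∀ x, (G x).1.1
        = t.1.take (n x.2.1) ++ (x.1, true) :: (x.1, false) :: t.1.drop (n x.2.1) ∧
        q (G x).1 = x.2.1 :=
      fun x => (main x.1 x.2.1 x.2.2).choose_spec
    have hGbij : Function.Bijective G := by
      constructor
      · rintro ⟨k, r, hr⟩ ⟨k', r', hr'⟩ hG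
        have e1a : (G ⟨k, ⟨r, hr⟩⟩).1.1
            = t.1.take (n r) ++ (k, true) :: (k, false) :: t.1.drop (n r) :=
          (hGspec ⟨k, ⟨r, hr⟩⟩).1
        have e2a : q (G ⟨k, ⟨r, hr⟩⟩).1 = r := (hGspec ⟨k, ⟨r, hr⟩⟩).2
        have e1b : (G ⟨k', ⟨r', hr'⟩⟩).1.1
            = t.1.take (n r') ++ (k', true) :: (k', false) :: t.1.drop (n r') :=
          (hGspec ⟨k', ⟨r', hr'⟩⟩).1
        have e2b : q (G ⟨k', ⟨r', hr'⟩⟩).1 = r' := (hGspec ⟨k', ⟨r', hr'⟩⟩).2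
        rw [hG] at e1a e2a
        have hrr : r = r' := e2a.symm.trans e2b
        subst hrr
        have e3 := e1a.symm.trans e1b
        have hk : k = k' := by
          have e4 := List.append_cancel_left e3
          simp only [List.cons.injEq, Prod.mk.injEq] at e4
          exact e4.1.1
        subst hk
        rfl
      · rintro ⟨p, hfpt⟩
        obtain ⟨k, hpeq, hU1, hU2, _⟩ := hsp p
        have hru : f1 (q p) = u := by
          apply Subtype.ext
          have h2 := (HP (q p)).2
          rw [h2]
          have h3 : CDAux.U (f p).1 = L1 (q p) ++ L2 (q p) := by
            rw [show (f p).1 = p.1.take (n (q p)) ++ p.1.drop (n (q p) + 2) from rfl,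
              CDAux.U_append, hU1, hU2]
          show L1 (q p) ++ L2 (q p) = CDAux.U t.1
          rw [← hfpt]
          exact h3.symm
        refine ⟨⟨k, ⟨q p, hru⟩⟩, ?_⟩
        apply Subtype.ext
        have e1 : (G ⟨k, ⟨q p, hru⟩⟩).1.1
            = t.1.take (n (q p)) ++ (k, true) :: (k, false) :: t.1.drop (n (q p)) :=
          (hGspec ⟨k, ⟨q p, hru⟩⟩).1
        apply Subtype.ext
        rw [e1]
        have hnn : n (q p) = (L1 (q p)).length := rfl
        have ht1 : t.1 = p.1.take (n (q p)) ++ p.1.drop (n (q p) + 2) := by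
          rw [← hfpt]
        have hle2 := hle p
        have e3 : t.1.take (n (q p)) = p.1.take (n (q p)) := by
          rw [ht1]
          apply List.take_left'
          simp only [List.length_take, p.2.1]
          omega
        have e4 : t.1.drop (n (q p)) = p.1.drop (n (q p) + 2) := by
          rw [ht1]
          apply List.drop_left'
          simp only [List.length_take, p.2.1]
          omega
        rw [e3, e4, ← hpeq]
    calc Nat.card {p // f p = t}
        = Nat.card (Fin s × {r // f1 r = u}) :=
          (Nat.card_congr (Equiv.ofBijective G hGbij)).symm
      _ = s * Nat.card {r // f1 r = u} := by
          rw [Nat.card_prod, Nat.card_eq_fintype_card, Fintype.card_fin]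
  refine ⟨f, fun p => ⟨_, _, (hsp p).choose, (hsp p).choose_spec.1, rfl⟩, ?_, ?_⟩
  · intro t
    obtain ⟨u, hcardeq⟩ := key t
    rw [hcardeq]
    haveI : Finite {l : List ℤ // l.length = 2 * m ∧ DyckL l} := CDAux.finite_dyck _
    haveI : Finite {r // f1 r = u} := Subtype.finite
    haveI : Nonempty {r // f1 r = u} := by
      obtain ⟨r, hr⟩ := hsurj u
      exact ⟨⟨r, hr⟩⟩
    have hpos : 0 < Nat.card {r // f1 r = u} := Nat.card_pos
    calc s = s * 1 := (mul_one s).symm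
      _ ≤ s * Nat.card {r // f1 r = u} := Nat.mul_le_mul_left s hpos
  · intro t
    obtain ⟨u, hcardeq⟩ := key t
    rw [hcardeq]
    calc s * Nat.card {r // f1 r = u} ≤ s * 4 := Nat.mul_le_mul_left s (hcard u)
      _ = 4 * s := Nat.mul_comm s 4
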